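/- Identification of stochastic-intervention estimands: Assume no unmeasured confounding, let (A*, π*) be a stochastic intervention, and assume positivity: P-a.s., for every b ∈ Fin m, π*(b|X) > 0 implies π(b|X) > 0. Then for every measurable set 𝒳' ⊆ 𝒳 and every subset 𝒜' ⊆ Fin m such that the event E = {X ∈ 𝒳'} ∩ {A ∈ 𝒜'} has P(E) > 0, one has E[f(X, A*, U) | E] = E[ Σ_{b ∈ Fin m} μ(b, X)·π*(b|X) | E ]. -/

import Mathlib

open MeasureTheory ProbabilityTheory
open scoped NNReal ENNReal

section AuxLemmas

variable {Ω : Type*} {mΩ : MeasurableSpace Ω} {P : Measure Ω} [IsProbabilityMeasure P]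

lemma integrable_of_bdd' {g : Ω → ℝ} (hg : AEStronglyMeasurable g P) {C : ℝ}
    (hb : ∀ᵐ ω ∂P, |g ω| ≤ C) : Integrable g P :=
  ⟨hg, HasFiniteIntegral.of_bounded (C := C) (by simpa [Real.norm_eq_abs] using hb)⟩

lemma integral_mul_condexp' {m : MeasurableSpace Ω} (hm : m ≤ mΩ) {φ ψ : Ω → ℝ}
    (hφ : StronglyMeasurable[m] φ) {c : ℝ} (hφb : ∀ᵐ ω ∂P, |φ ω| ≤ c)
    (hψ : Integrable ψ P) :
    ∫ ω, φ ω * (P[ψ|m]) ω ∂P = ∫ ω, φ ω * ψ ω ∂P := by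
  have hφψ : Integrable (fun ω => φ ω * ψ ω) P :=
    hψ.bdd_mul ((hφ.mono hm).aestronglyMeasurable)
      (by simpa [Real.norm_eq_abs] using hφb)
  have h := condExp_stronglyMeasurable_mul_of_bound hm hφ hψ c
    (by simpa [Real.norm_eq_abs] using hφb)
  calc ∫ ω, φ ω * (P[ψ|m]) ω ∂P
      = ∫ ω, (P[fun ω => φ ω * ψ ω|m]) ω ∂P := (integral_congr_ae h).symm
    _ = ∫ ω, φ ω * ψ ω ∂P := integral_condExp hm

end AuxLemmas

/-- Product rule for conditional expectations under conditional independence. -/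
lemma condexp_indicator_mul_of_condIndepFun
    {Ω : Type*} (m' : MeasurableSpace Ω) {mΩ : MeasurableSpace Ω} [StandardBorelSpace Ω]
    {P : Measure Ω} [IsProbabilityMeasure P]
    {𝒳 𝒰 β : Type*} [MeasurableSpace 𝒳] [MeasurableSpace 𝒰] [MeasurableSpace β]
    {X : Ω → 𝒳} {U : Ω → 𝒰} {A : Ω → β}
    (hX : Measurable X) (hU : Measurable U) (hA : Measurable A)
    (hm' : m' ≤ mΩ) (hm'eq : m' = MeasurableSpace.comap X inferInstance)
    (hNUC : CondIndepFun m' hm' A U P)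
    (s : Set β) (hs : MeasurableSet s)
    (h : 𝒳 × 𝒰 → ℝ) (hh : Measurable h) (c : ℝ) (hhb : ∀ p, |h p| ≤ c) :
    P[fun ω => Set.indicator (A ⁻¹' s) (fun _ => (1:ℝ)) ω * h (X ω, U ω) | m']
      =ᵐ[P] fun ω => (P⟦A ⁻¹' s | m'⟧) ω * (P[fun ω => h (X ω, U ω) | m']) ω := by
  classical
  set p : Ω → ℝ := P⟦A ⁻¹' s | m'⟧ with hp_def
  set q : Ω → ℝ := P[fun ω => h (X ω, U ω) | m'] with hq_def
  have hAs : MeasurableSet (A ⁻¹' s) := hA hs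
  have hp_meas : StronglyMeasurable[m'] p := stronglyMeasurable_condExp
  have hq_meas : StronglyMeasurable[m'] q := stronglyMeasurable_condExp
  have hp_bdd : ∀ᵐ ω ∂P, |p ω| ≤ ((1 : ℝ≥0) : ℝ) := by
    refine ae_bdd_condExp_of_ae_bdd (R := 1) (ae_of_all _ fun ω => ?_)
    by_cases hω : ω ∈ A ⁻¹' s <;> simp [Set.indicator_apply, hω]
  have hq_bdd : ∀ᵐ ω ∂P, |q ω| ≤ ((‖c‖₊ : ℝ≥0) : ℝ) := by
    refine ae_bdd_condExp_of_ae_bdd (ae_of_all _ fun ω => ?_)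
    simpa [Real.norm_eq_abs] using (hhb (X ω, U ω)).trans (le_abs_self c)
  have hp_nonneg : 0 ≤ᵐ[P] p := by
    refine condExp_nonneg (ae_of_all _ fun ω => ?_)
    by_cases hω : ω ∈ A ⁻¹' s <;> simp [Set.indicator_apply, hω]
  have hind_int : ∀ (T : Set Ω), MeasurableSet T →
      Integrable (Set.indicator T (fun _ => (1:ℝ))) P := by
    intro T hT
    refine integrable_of_bdd' ((measurable_const.indicator hT).aestronglyMeasurable)
      (C := 1) (ae_of_all _ fun ω => ?_)
    by_cases hω : ω ∈ T <;> simp [Set.indicator_apply, hω]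
  have hW : Measurable (fun ω => (X ω, U ω)) := hX.prodMk hU
  have hhW_meas : Measurable (fun ω => h (X ω, U ω)) := hh.comp hW
  have hhW_int : Integrable (fun ω => h (X ω, U ω)) P :=
    integrable_of_bdd' hhW_meas.aestronglyMeasurable (C := c) (ae_of_all _ fun ω => hhb _)
  have hp_int : Integrable p P := integrable_condExp
  have hCI := (condIndepFun_iff_condExp_inter_preimage_eq_mul (μ := P) (hm' := hm') hA hU).mp hNUC
  -- key real computation for rectangles
  have key_real : ∀ (t₁ : Set 𝒳) (t₂ : Set 𝒰), MeasurableSet t₁ → MeasurableSet t₂ →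
      (P ((A ⁻¹' s) ∩ (X ⁻¹' t₁ ∩ U ⁻¹' t₂))).toReal
        = ∫ ω in X ⁻¹' t₁ ∩ U ⁻¹' t₂, p ω ∂P := by
    intro t₁ t₂ ht₁ ht₂
    have ht₁' : MeasurableSet[m'] (X ⁻¹' t₁) := by
      rw [hm'eq]; exact ⟨t₁, ht₁, rfl⟩
    have ht₁'' : MeasurableSet (X ⁻¹' t₁) := hX ht₁
    have ht₂'' : MeasurableSet (U ⁻¹' t₂) := hU ht₂
    set pu : Ω → ℝ := P⟦U ⁻¹' t₂ | m'⟧ with hpu_def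
    have hpu_meas : StronglyMeasurable[m'] pu := stronglyMeasurable_condExp
    have lhs1 : (P ((A ⁻¹' s) ∩ (X ⁻¹' t₁ ∩ U ⁻¹' t₂))).toReal
        = ∫ ω in X ⁻¹' t₁, Set.indicator (A ⁻¹' s ∩ U ⁻¹' t₂) (fun _ => (1:ℝ)) ω ∂P := by
      have hsets : A ⁻¹' s ∩ (X ⁻¹' t₁ ∩ U ⁻¹' t₂) = X ⁻¹' t₁ ∩ (A ⁻¹' s ∩ U ⁻¹' t₂) := by
        ext ω; constructor
        · rintro ⟨hb, h1, h2⟩; exact ⟨h1, hb, h2⟩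
        · rintro ⟨h1, hb, h2⟩; exact ⟨hb, h1, h2⟩
      rw [setIntegral_indicator (hAs.inter ht₂''), setIntegral_const, smul_eq_mul, mul_one,
        hsets, measureReal_def]
    have lhs2 : ∫ ω in X ⁻¹' t₁, Set.indicator (A ⁻¹' s ∩ U ⁻¹' t₂) (fun _ => (1:ℝ)) ω ∂P
        = ∫ ω in X ⁻¹' t₁, p ω * pu ω ∂P := by
      rw [← setIntegral_condExp hm' (hind_int _ (hAs.inter ht₂'')) ht₁']
      refine setIntegral_congr_ae ht₁'' ?_
      have h2 := hCI s t₂ hs ht₂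
      filter_upwards [h2] with ω hω _ using hω
    have rhs1 : ∫ ω in X ⁻¹' t₁ ∩ U ⁻¹' t₂, p ω ∂P
        = ∫ ω, (Set.indicator (X ⁻¹' t₁) (fun _ => (1:ℝ)) ω * p ω)
            * Set.indicator (U ⁻¹' t₂) (fun _ => (1:ℝ)) ω ∂P := by
      rw [← integral_indicator (ht₁''.inter ht₂'')]
      refine integral_congr_ae (ae_of_all _ fun ω => ?_)
      by_cases h1 : ω ∈ X ⁻¹' t₁ <;> by_cases h2 : ω ∈ U ⁻¹' t₂ <;>
        simp [Set.indicator_apply, h1, h2]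
    have hφm : StronglyMeasurable[m'] (fun ω =>
        Set.indicator (X ⁻¹' t₁) (fun _ => (1:ℝ)) ω * p ω) :=
      ((stronglyMeasurable_const (β := ℝ)).indicator ht₁').mul hp_meas
    have hφb : ∀ᵐ ω ∂P, |Set.indicator (X ⁻¹' t₁) (fun _ => (1:ℝ)) ω * p ω| ≤ (1 : ℝ) := by
      filter_upwards [hp_bdd] with ω hω
      by_cases h1 : ω ∈ X ⁻¹' t₁ <;> simp [Set.indicator_apply, h1]
      · simpa using hω
    have rhs2 : ∫ ω, (Set.indicator (X ⁻¹' t₁) (fun _ => (1:ℝ)) ω * p ω)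
            * Set.indicator (U ⁻¹' t₂) (fun _ => (1:ℝ)) ω ∂P
        = ∫ ω in X ⁻¹' t₁, p ω * pu ω ∂P := by
      rw [← integral_mul_condexp' hm' hφm hφb (hind_int _ ht₂''), ← hpu_def]
      rw [← integral_indicator ht₁'']
      refine integral_congr_ae (ae_of_all _ fun ω => ?_)
      by_cases h1 : ω ∈ X ⁻¹' t₁ <;> simp [Set.indicator_apply, h1, mul_assoc]
    rw [lhs1, lhs2, rhs1, rhs2]
  -- measure-level identity
  have hdens_meas : Measurable (fun ω => ENNReal.ofReal (p ω)) :=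
    ENNReal.measurable_ofReal.comp (hp_meas.mono hm').measurable
  have rect : ∀ (t₁ : Set 𝒳) (t₂ : Set 𝒰), MeasurableSet t₁ → MeasurableSet t₂ →
      Measure.map (fun ω => (X ω, U ω)) (P.restrict (A ⁻¹' s)) (t₁ ×ˢ t₂)
        = Measure.map (fun ω => (X ω, U ω)) (P.withDensity (fun ω => ENNReal.ofReal (p ω)))
            (t₁ ×ˢ t₂) := by
    intro t₁ t₂ ht₁ ht₂
    have hT : MeasurableSet (t₁ ×ˢ t₂) := ht₁.prod ht₂
    have hpre : (fun ω => (X ω, U ω)) ⁻¹' (t₁ ×ˢ t₂) = X ⁻¹' t₁ ∩ U ⁻¹' t₂ :=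
      Set.mk_preimage_prod X U
    rw [Measure.map_apply hW hT, Measure.map_apply hW hT, hpre,
      Measure.restrict_apply ((hX ht₁).inter (hU ht₂)),
      withDensity_apply _ ((hX ht₁).inter (hU ht₂))]
    have h1 : ∫⁻ ω in X ⁻¹' t₁ ∩ U ⁻¹' t₂, ENNReal.ofReal (p ω) ∂P
        = ENNReal.ofReal (∫ ω in X ⁻¹' t₁ ∩ U ⁻¹' t₂, p ω ∂P) :=
      (ofReal_integral_eq_lintegral_ofReal hp_int.integrableOn
        (ae_restrict_of_ae hp_nonneg)).symm
    rw [h1, ← key_real t₁ t₂ ht₁ ht₂, Set.inter_comm (X ⁻¹' t₁ ∩ U ⁻¹' t₂),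
      ENNReal.ofReal_toReal (measure_ne_top _ _)]
  have key_meas : Measure.map (fun ω => (X ω, U ω)) (P.restrict (A ⁻¹' s))
      = Measure.map (fun ω => (X ω, U ω)) (P.withDensity (fun ω => ENNReal.ofReal (p ω))) := by
    haveI : IsFiniteMeasure (Measure.map (fun ω => (X ω, U ω)) (P.restrict (A ⁻¹' s))) := by
      constructor
      rw [Measure.map_apply hW MeasurableSet.univ]
      exact (measure_lt_top _ _)
    refine ext_of_generate_finite _ generateFrom_prod.symm isPiSystem_prod ?_ ?_
    · rintro T ⟨t₁, ht₁, t₂, ht₂, rfl⟩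
      exact rect t₁ t₂ ht₁ ht₂
    · rw [← Set.univ_prod_univ]
      exact rect _ _ MeasurableSet.univ MeasurableSet.univ
  -- integral consequence of the measure identity
  have key_int : ∀ (k : 𝒳 × 𝒰 → ℝ), Measurable k →
      ∫ ω, Set.indicator (A ⁻¹' s) (fun _ => (1:ℝ)) ω * k (X ω, U ω) ∂P
        = ∫ ω, p ω * k (X ω, U ω) ∂P := by
    intro k hk
    have h1 : ∫ ω, Set.indicator (A ⁻¹' s) (fun _ => (1:ℝ)) ω * k (X ω, U ω) ∂P
        = ∫ z, k z ∂(Measure.map (fun ω => (X ω, U ω)) (P.restrict (A ⁻¹' s))) := by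
      rw [integral_map hW.aemeasurable hk.aestronglyMeasurable, ← integral_indicator hAs]
      refine integral_congr_ae (ae_of_all _ fun ω => ?_)
      by_cases hω : ω ∈ A ⁻¹' s <;> simp [Set.indicator_apply, hω]
    have h2 : ∫ z, k z ∂(Measure.map (fun ω => (X ω, U ω))
          (P.withDensity (fun ω => ENNReal.ofReal (p ω))))
        = ∫ ω, p ω * k (X ω, U ω) ∂P := by
      rw [integral_map hW.aemeasurable hk.aestronglyMeasurable]
      have h3 : (fun ω => ENNReal.ofReal (p ω)) = fun ω => ((Real.toNNReal (p ω) : ℝ≥0) : ℝ≥0∞) := rfl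
      have hmt : Measurable fun ω => Real.toNNReal (p ω) :=
        measurable_real_toNNReal.comp (hp_meas.mono hm').measurable
      rw [h3, integral_withDensity_eq_integral_smul hmt (fun ω => k (X ω, U ω))]
      refine integral_congr_ae ?_
      filter_upwards [hp_nonneg] with ω hω
      simp [NNReal.smul_def, Real.coe_toNNReal _ hω]
    rw [h1, key_meas, h2]
  -- conclude via characterization of condexp
  refine (ae_eq_condExp_of_forall_setIntegral_eq hm' ?_ ?_ ?_ ?_).symm
  · -- integrability of the target function
    refine integrable_of_bdd' ?_ (C := |c|) (ae_of_all _ fun ω => ?_)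
    · exact ((measurable_const.indicator hAs).mul hhW_meas).aestronglyMeasurable
    · by_cases hω : ω ∈ A ⁻¹' s <;>
        simp [Set.indicator_apply, hω, abs_mul]
      exact (hhb _).trans (le_abs_self c)
  · intro S hS hPS
    refine (integrable_of_bdd' ?_ (C := 1 * |c|) ?_).integrableOn
    · exact (((hp_meas.mono hm').mul (hq_meas.mono hm')).measurable).aestronglyMeasurable
    · filter_upwards [hp_bdd, hq_bdd] with ω h1 h2
      rw [abs_mul]
      exact mul_le_mul (by simpa using h1) (by simpa [Real.norm_eq_abs] using h2)
        (abs_nonneg _) zero_le_one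
  · intro S hS hPS
    rw [hm'eq] at hS
    obtain ⟨s', hs', rfl⟩ := hS
    have hS'' : MeasurableSet (X ⁻¹' s') := hX hs'
    have hSm' : MeasurableSet[m'] (X ⁻¹' s') := by rw [hm'eq]; exact ⟨s', hs', rfl⟩
    set k : 𝒳 × 𝒰 → ℝ := fun z => Set.indicator s' (fun _ => (1:ℝ)) z.1 * h z with hk_def
    have hk_meas : Measurable k :=
      ((measurable_const.indicator hs').comp measurable_fst).mul hh
    have hφm : StronglyMeasurable[m'] (fun ω =>
        Set.indicator (X ⁻¹' s') (fun _ => (1:ℝ)) ω * p ω) :=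
      ((stronglyMeasurable_const (β := ℝ)).indicator hSm').mul hp_meas
    have hφb : ∀ᵐ ω ∂P, |Set.indicator (X ⁻¹' s') (fun _ => (1:ℝ)) ω * p ω| ≤ (1 : ℝ) := by
      filter_upwards [hp_bdd] with ω hω
      by_cases h1 : ω ∈ X ⁻¹' s' <;> simp [Set.indicator_apply, h1]
      · simpa using hω
    calc ∫ ω in X ⁻¹' s', p ω * q ω ∂P
        = ∫ ω, (Set.indicator (X ⁻¹' s') (fun _ => (1:ℝ)) ω * p ω) * q ω ∂P := by
          rw [← integral_indicator hS'']
          refine integral_congr_ae (ae_of_all _ fun ω => ?_)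
          by_cases h1 : ω ∈ X ⁻¹' s' <;> simp [Set.indicator_apply, h1, mul_assoc]
      _ = ∫ ω, (Set.indicator (X ⁻¹' s') (fun _ => (1:ℝ)) ω * p ω) * h (X ω, U ω) ∂P := by
          rw [hq_def]
          exact integral_mul_condexp' hm' hφm hφb hhW_int
      _ = ∫ ω, p ω * k (X ω, U ω) ∂P := by
          refine integral_congr_ae (ae_of_all _ fun ω => ?_)
          simp only [hk_def, Set.indicator_apply, Set.mem_preimage]
          by_cases h1 : X ω ∈ s' <;> simp [h1] <;> ring
      _ = ∫ ω, Set.indicator (A ⁻¹' s) (fun _ => (1:ℝ)) ω * k (X ω, U ω) ∂P :=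
          (key_int k hk_meas).symm
      _ = ∫ ω in X ⁻¹' s', Set.indicator (A ⁻¹' s) (fun _ => (1:ℝ)) ω * h (X ω, U ω) ∂P := by
          rw [← integral_indicator hS'']
          refine integral_congr_ae (ae_of_all _ fun ω => ?_)
          simp only [hk_def, Set.indicator_apply, Set.mem_preimage]
          by_cases h1 : X ω ∈ s' <;> by_cases h2 : A ω ∈ s <;> simp [h1, h2] <;> ring
  · exact StronglyMeasurable.aestronglyMeasurable (hp_meas.mul hq_meas)

/-- Identification of stochastic-intervention estimands. -/
theorem identification_stochastic_intervention
    {Ω 𝒳 𝒰 : Type*} [MeasurableSpace Ω] [StandardBorelSpace Ω]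
    [MeasurableSpace 𝒳] [StandardBorelSpace 𝒳]
    [MeasurableSpace 𝒰] [StandardBorelSpace 𝒰]
    (P : Measure Ω) [IsProbabilityMeasure P]
    (m : ℕ) (hm : 1 ≤ m)
    (X : Ω → 𝒳) (U : Ω → 𝒰) (A : Ω → Fin m)
    (hX : Measurable X) (hU : Measurable U) (hA : Measurable A)
    (f : 𝒳 → Fin m → 𝒰 → ℝ)
    (hf : Measurable fun p : 𝒳 × Fin m × 𝒰 => f p.1 p.2.1 p.2.2)
    (C : ℝ) (hfbdd : ∀ x b u, |f x b u| ≤ C)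
    -- propensity scores: π(b|X) is a version of E[1{A=b} | σ(X)]
    (π : Fin m → 𝒳 → ℝ) (hπmeas : ∀ b, Measurable (π b))
    (hπ01 : ∀ b x, 0 ≤ π b x ∧ π b x ≤ 1)
    (hπ : ∀ b, (fun ω => π b (X ω)) =ᵐ[P]
      P[fun ω => (if A ω = b then (1 : ℝ) else 0) | MeasurableSpace.comap X inferInstance])
    -- outcome regression: μ(b,X)·π(b|X) is a version of E[1{A=b}·Y | σ(X)]
    (μreg : Fin m → 𝒳 → ℝ) (hμmeas : ∀ b, Measurable (μreg b))
    (Cμ : ℝ) (hμbdd : ∀ b x, |μreg b x| ≤ Cμ)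
    (hμ : ∀ b, (fun ω => μreg b (X ω) * π b (X ω)) =ᵐ[P]
      P[fun ω => (if A ω = b then (1 : ℝ) else 0) * f (X ω) (A ω) (U ω) |
        MeasurableSpace.comap X inferInstance])
    -- no unmeasured confounding: A ⫫ U | σ(X)
    (hNUC : CondIndepFun (MeasurableSpace.comap X inferInstance) hX.comap_le A U P)
    -- stochastic intervention (A*, π*)
    (Astar : Ω → Fin m) (hAstar : Measurable Astar)
    (πstar : Fin m → 𝒳 → ℝ) (hπstarmeas : ∀ b, Measurable (πstar b))
    (hπstar01 : ∀ b x, 0 ≤ πstar b x ∧ πstar b x ≤ 1)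
    (hπstar : ∀ b, (fun ω => πstar b (X ω)) =ᵐ[P]
      P[fun ω => (if Astar ω = b then (1 : ℝ) else 0) |
        MeasurableSpace.comap (fun ω => (X ω, A ω, U ω)) inferInstance])
    -- positivity
    (hpos : ∀ᵐ ω ∂P, ∀ b : Fin m, 0 < πstar b (X ω) → 0 < π b (X ω))
    -- reference population
    (𝒳' : Set 𝒳) (h𝒳' : MeasurableSet 𝒳') (𝒜' : Set (Fin m))
    (E : Set Ω) (hE : E = {ω | X ω ∈ 𝒳'} ∩ {ω | A ω ∈ 𝒜'})
    (hPE : 0 < P E) :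
    (∫ ω in E, f (X ω) (Astar ω) (U ω) ∂P) / (P E).toReal
      = (∫ ω in E, ∑ b : Fin m, μreg b (X ω) * πstar b (X ω) ∂P) / (P E).toReal := by
  congr 1
  -- basic measurability facts
  have h𝒜'm : MeasurableSet 𝒜' := (Set.to_countable 𝒜').measurableSet
  have hE_meas : MeasurableSet E := by
    rw [hE]; exact (hX h𝒳').inter (hA h𝒜'm)
  have hW3 : Measurable (fun ω => (X ω, A ω, U ω)) := hX.prodMk (hA.prodMk hU)
  have hE_mG : MeasurableSet[MeasurableSpace.comap (fun ω => (X ω, A ω, U ω)) inferInstance] E := by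
    refine ⟨𝒳' ×ˢ (𝒜' ×ˢ (Set.univ : Set 𝒰)), h𝒳'.prod (h𝒜'm.prod MeasurableSet.univ), ?_⟩
    rw [hE]; ext ω
    simp [Set.mem_prod]
  have hW3' : Measurable[MeasurableSpace.comap (fun ω => (X ω, A ω, U ω)) inferInstance]
      (fun ω => (X ω, A ω, U ω)) := Measurable.of_comap_le le_rfl
  -- per-arm outcome functions
  have hgb_meas : ∀ b : Fin m, Measurable (fun ω => f (X ω) b (U ω)) := fun b =>
    hf.comp (hX.prodMk (measurable_const.prodMk hU))
  have hgb_int : ∀ b : Fin m, Integrable (fun ω => f (X ω) b (U ω)) P := fun b =>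
    integrable_of_bdd' (hgb_meas b).aestronglyMeasurable (C := C)
      (ae_of_all _ fun ω => hfbdd _ _ _)
  have hitegb_int : ∀ b : Fin m,
      Integrable (fun ω => (if Astar ω = b then (1:ℝ) else 0) * f (X ω) b (U ω)) P := by
    intro b
    refine integrable_of_bdd' ?_ (C := |C|) (ae_of_all _ fun ω => ?_)
    · exact ((Measurable.ite (hAstar (MeasurableSet.singleton b)) measurable_const
        measurable_const).mul (hgb_meas b)).aestronglyMeasurable
    · by_cases hω : Astar ω = b <;> simp [hω]
      exact (hfbdd _ _ _).trans (le_abs_self C)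
  -- Step A: intervention step
  have stepA : ∀ b : Fin m,
      ∫ ω in E, (if Astar ω = b then (1:ℝ) else 0) * f (X ω) b (U ω) ∂P
        = ∫ ω in E, f (X ω) b (U ω) * πstar b (X ω) ∂P := by
    intro b
    rw [← setIntegral_condExp hW3.comap_le (hitegb_int b) hE_mG]
    refine setIntegral_congr_ae hE_meas ?_
    have hre : (fun ω => (if Astar ω = b then (1:ℝ) else 0) * f (X ω) b (U ω))
        = fun ω => f (X ω) b (U ω) * (if Astar ω = b then (1:ℝ) else 0) := by
      funext ω; ring
    have hsm : StronglyMeasurable[MeasurableSpace.comap (fun ω => (X ω, A ω, U ω)) inferInstance]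
        (fun ω => f (X ω) b (U ω)) :=
      ((hf.comp ((measurable_fst.prodMk (measurable_const.prodMk
        measurable_snd.snd)))).comp hW3').stronglyMeasurable
    have hite_int : Integrable (fun ω => if Astar ω = b then (1:ℝ) else 0) P := by
      refine integrable_of_bdd' ?_ (C := 1) (ae_of_all _ fun ω => ?_)
      · exact (Measurable.ite (hAstar (MeasurableSet.singleton b)) measurable_const
          measurable_const).aestronglyMeasurable
      · by_cases hω : Astar ω = b <;> simp [hω]
    have hpull := condExp_stronglyMeasurable_mul_of_bound hW3.comap_le hsm hite_int C
      (ae_of_all _ fun ω => by simpa [Real.norm_eq_abs] using hfbdd (X ω) b (U ω))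
    rw [hre]
    filter_upwards [hpull, hπstar b] with ω h1 h2 _
    calc (P[fun ω => f (X ω) b (U ω) * (if Astar ω = b then (1:ℝ) else 0)|
            MeasurableSpace.comap (fun ω => (X ω, A ω, U ω)) inferInstance]) ω
        = f (X ω) b (U ω) * (P[fun ω => (if Astar ω = b then (1:ℝ) else 0)|
            MeasurableSpace.comap (fun ω => (X ω, A ω, U ω)) inferInstance]) ω := h1
      _ = f (X ω) b (U ω) * πstar b (X ω) := by rw [← h2]
  -- Step B: confounding adjustment
  have stepB : ∀ b : Fin m,
      ∫ ω in E, f (X ω) b (U ω) * πstar b (X ω) ∂P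
        = ∫ ω in E, μreg b (X ω) * πstar b (X ω) ∂P := by
    intro b
    have hXc : Measurable[MeasurableSpace.comap X inferInstance] X := Measurable.of_comap_le le_rfl
    -- the outcome function on 𝒳 × 𝒰
    have key1 := condexp_indicator_mul_of_condIndepFun (MeasurableSpace.comap X inferInstance)
      hX hU hA hX.comap_le rfl hNUC 𝒜' h𝒜'm (fun z => f z.1 b z.2)
      (hf.comp (measurable_fst.prodMk (measurable_const.prodMk measurable_snd)))
      C (fun z => hfbdd _ _ _)
    have key2 := condexp_indicator_mul_of_condIndepFun (MeasurableSpace.comap X inferInstance)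
      hX hU hA hX.comap_le rfl hNUC ({b} : Set (Fin m)) (MeasurableSet.singleton b)
      (fun z => f z.1 b z.2)
      (hf.comp (measurable_fst.prodMk (measurable_const.prodMk measurable_snd)))
      C (fun z => hfbdd _ _ _)
    -- identify μreg with the conditional outcome mean where π > 0
    have hfun : (fun ω => (if A ω = b then (1:ℝ) else 0) * f (X ω) (A ω) (U ω))
        = fun ω => Set.indicator (A ⁻¹' ({b} : Set (Fin m))) (fun _ => (1:ℝ)) ω
            * f (X ω) b (U ω) := by
      funext ω
      by_cases hω : A ω = b
      · simp [Set.indicator_apply, hω]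
      · simp [Set.indicator_apply, hω]
    have hite_ind : (fun ω => if A ω = b then (1:ℝ) else 0)
        = Set.indicator (A ⁻¹' ({b} : Set (Fin m))) (fun _ => (1:ℝ)) := by
      funext ω
      by_cases hω : A ω = b <;> simp [Set.indicator_apply, hω]
    have hμb : (fun ω => μreg b (X ω) * π b (X ω)) =ᵐ[P]
        fun ω => (P⟦A ⁻¹' ({b} : Set (Fin m)) | MeasurableSpace.comap X inferInstance⟧) ω
          * (P[fun ω => (fun z : 𝒳 × 𝒰 => f z.1 b z.2) (X ω, U ω) |
              MeasurableSpace.comap X inferInstance]) ω := by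
      have h0 := hμ b
      rw [hfun] at h0
      exact h0.trans key2
    have hπb : (fun ω => π b (X ω)) =ᵐ[P]
        P⟦A ⁻¹' ({b} : Set (Fin m)) | MeasurableSpace.comap X inferInstance⟧ := by
      have h0 := hπ b
      rwa [hite_ind] at h0
    have hcancel : ∀ᵐ ω ∂P, 0 < π b (X ω) →
        μreg b (X ω) = (P[fun ω => (fun z : 𝒳 × 𝒰 => f z.1 b z.2) (X ω, U ω) |
          MeasurableSpace.comap X inferInstance]) ω := by
      filter_upwards [hμb, hπb] with ω h1 h2 hgt
      rw [← h2, mul_comm (π b (X ω))] at h1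
      exact mul_right_cancel₀ hgt.ne' h1
    -- main a.e. identity
    have hAE : ∀ᵐ ω ∂P,
        (Set.indicator (X ⁻¹' 𝒳') (fun _ => (1:ℝ)) ω * πstar b (X ω))
            * ((P⟦A ⁻¹' 𝒜' | MeasurableSpace.comap X inferInstance⟧) ω
              * (P[fun ω => (fun z : 𝒳 × 𝒰 => f z.1 b z.2) (X ω, U ω) |
                  MeasurableSpace.comap X inferInstance]) ω)
          = (Set.indicator (X ⁻¹' 𝒳') (fun _ => (1:ℝ)) ω * πstar b (X ω))
            * ((P⟦A ⁻¹' 𝒜' | MeasurableSpace.comap X inferInstance⟧) ω * μreg b (X ω)) := by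
      filter_upwards [hcancel, hpos] with ω h1 h2
      by_cases hz : πstar b (X ω) = 0
      · simp [hz]
      · have hgt : 0 < πstar b (X ω) := lt_of_le_of_ne (hπstar01 b (X ω)).1 (Ne.symm hz)
        rw [h1 (h2 b hgt)]
    -- measurability and bounds for the multiplier functions
    have hXs' : MeasurableSet[MeasurableSpace.comap X inferInstance] (X ⁻¹' 𝒳') :=
      ⟨𝒳', h𝒳', rfl⟩
    have hφm : StronglyMeasurable[MeasurableSpace.comap X inferInstance]
        (fun ω => Set.indicator (X ⁻¹' 𝒳') (fun _ => (1:ℝ)) ω * πstar b (X ω)) :=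
      ((stronglyMeasurable_const (β := ℝ)).indicator hXs').mul
        ((hπstarmeas b).comp hXc).stronglyMeasurable
    have hφb : ∀ᵐ ω ∂P,
        |Set.indicator (X ⁻¹' 𝒳') (fun _ => (1:ℝ)) ω * πstar b (X ω)| ≤ (1:ℝ) := by
      refine ae_of_all _ fun ω => ?_
      rw [abs_mul]
      refine mul_le_one₀ ?_ (abs_nonneg _) ?_
      · by_cases hω : ω ∈ X ⁻¹' 𝒳' <;> simp [Set.indicator_apply, hω]
      · rw [abs_of_nonneg (hπstar01 b (X ω)).1]; exact (hπstar01 b (X ω)).2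
    have hψm : StronglyMeasurable[MeasurableSpace.comap X inferInstance]
        (fun ω => Set.indicator (X ⁻¹' 𝒳') (fun _ => (1:ℝ)) ω * πstar b (X ω)
          * μreg b (X ω)) :=
      hφm.mul ((hμmeas b).comp hXc).stronglyMeasurable
    have hψb : ∀ᵐ ω ∂P,
        |Set.indicator (X ⁻¹' 𝒳') (fun _ => (1:ℝ)) ω * πstar b (X ω) * μreg b (X ω)| ≤ |Cμ| := by
      filter_upwards [hφb] with ω h1
      rw [abs_mul]
      calc |Set.indicator (X ⁻¹' 𝒳') (fun _ => (1:ℝ)) ω * πstar b (X ω)| * |μreg b (X ω)|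
          ≤ 1 * |Cμ| := mul_le_mul h1 ((hμbdd b (X ω)).trans (le_abs_self Cμ))
            (abs_nonneg _) zero_le_one
        _ = |Cμ| := one_mul _
    have hχ_int : Integrable (Set.indicator (A ⁻¹' 𝒜') (fun _ => (1:ℝ))) P := by
      refine integrable_of_bdd' ((measurable_const.indicator (hA h𝒜'm)).aestronglyMeasurable)
        (C := 1) (ae_of_all _ fun ω => ?_)
      by_cases hω : ω ∈ A ⁻¹' 𝒜' <;> simp [Set.indicator_apply, hω]
    have hχhb_int : Integrable (fun ω => Set.indicator (A ⁻¹' 𝒜') (fun _ => (1:ℝ)) ω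
        * (fun z : 𝒳 × 𝒰 => f z.1 b z.2) (X ω, U ω)) P := by
      refine integrable_of_bdd' ?_ (C := |C|) (ae_of_all _ fun ω => ?_)
      · exact ((measurable_const.indicator (hA h𝒜'm)).mul (hgb_meas b)).aestronglyMeasurable
      · by_cases hω : ω ∈ A ⁻¹' 𝒜' <;> simp [Set.indicator_apply, hω]
        exact (hfbdd _ _ _).trans (le_abs_self C)
    have hE_ind : ∀ (g : Ω → ℝ), ∫ ω in E, g ω ∂P = ∫ ω, Set.indicator E g ω ∂P :=
      fun g => (integral_indicator hE_meas).symm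
    calc ∫ ω in E, f (X ω) b (U ω) * πstar b (X ω) ∂P
        = ∫ ω, (Set.indicator (X ⁻¹' 𝒳') (fun _ => (1:ℝ)) ω * πstar b (X ω))
            * (Set.indicator (A ⁻¹' 𝒜') (fun _ => (1:ℝ)) ω
              * (fun z : 𝒳 × 𝒰 => f z.1 b z.2) (X ω, U ω)) ∂P := by
          rw [hE_ind]
          refine integral_congr_ae (ae_of_all _ fun ω => ?_)
          simp only [hE, Set.indicator_apply, Set.mem_inter_iff, Set.mem_setOf_eq,
            Set.mem_preimage]
          by_cases h1 : X ω ∈ 𝒳' <;> by_cases h2 : A ω ∈ 𝒜' <;> simp [h1, h2] <;> ring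
      _ = ∫ ω, (Set.indicator (X ⁻¹' 𝒳') (fun _ => (1:ℝ)) ω * πstar b (X ω))
            * (P[fun ω => Set.indicator (A ⁻¹' 𝒜') (fun _ => (1:ℝ)) ω
              * (fun z : 𝒳 × 𝒰 => f z.1 b z.2) (X ω, U ω) |
                MeasurableSpace.comap X inferInstance]) ω ∂P :=
          (integral_mul_condexp' hX.comap_le hφm hφb hχhb_int).symm
      _ = ∫ ω, (Set.indicator (X ⁻¹' 𝒳') (fun _ => (1:ℝ)) ω * πstar b (X ω))
            * ((P⟦A ⁻¹' 𝒜' | MeasurableSpace.comap X inferInstance⟧) ω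
              * (P[fun ω => (fun z : 𝒳 × 𝒰 => f z.1 b z.2) (X ω, U ω) |
                  MeasurableSpace.comap X inferInstance]) ω) ∂P := by
          refine integral_congr_ae ?_
          filter_upwards [key1] with ω h1
          rw [h1]
      _ = ∫ ω, (Set.indicator (X ⁻¹' 𝒳') (fun _ => (1:ℝ)) ω * πstar b (X ω))
            * ((P⟦A ⁻¹' 𝒜' | MeasurableSpace.comap X inferInstance⟧) ω * μreg b (X ω)) ∂P :=
          integral_congr_ae hAE
      _ = ∫ ω, (Set.indicator (X ⁻¹' 𝒳') (fun _ => (1:ℝ)) ω * πstar b (X ω) * μreg b (X ω))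
            * (P[Set.indicator (A ⁻¹' 𝒜') (fun _ => (1:ℝ)) |
                MeasurableSpace.comap X inferInstance]) ω ∂P := by
          refine integral_congr_ae (ae_of_all _ fun ω => ?_)
          ring
      _ = ∫ ω, (Set.indicator (X ⁻¹' 𝒳') (fun _ => (1:ℝ)) ω * πstar b (X ω) * μreg b (X ω))
            * Set.indicator (A ⁻¹' 𝒜') (fun _ => (1:ℝ)) ω ∂P :=
          integral_mul_condexp' hX.comap_le hψm hψb hχ_int
      _ = ∫ ω in E, μreg b (X ω) * πstar b (X ω) ∂P := by
          rw [hE_ind]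
          refine integral_congr_ae (ae_of_all _ fun ω => ?_)
          simp only [hE, Set.indicator_apply, Set.mem_inter_iff, Set.mem_setOf_eq,
            Set.mem_preimage]
          by_cases h1 : X ω ∈ 𝒳' <;> by_cases h2 : A ω ∈ 𝒜' <;> simp [h1, h2] <;> ring
  -- assemble
  have hsum : ∀ ω, f (X ω) (Astar ω) (U ω)
      = ∑ b : Fin m, (if Astar ω = b then (1:ℝ) else 0) * f (X ω) b (U ω) := by
    intro ω
    rw [Finset.sum_congr rfl (fun b _ => by
      rw [ite_mul, one_mul, zero_mul]), Finset.sum_ite_eq]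
    simp
  have hμπ_int : ∀ b : Fin m, Integrable (fun ω => μreg b (X ω) * πstar b (X ω)) P := by
    intro b
    refine integrable_of_bdd' ?_ (C := |Cμ| * 1) (ae_of_all _ fun ω => ?_)
    · exact (((hμmeas b).comp hX).mul ((hπstarmeas b).comp hX)).aestronglyMeasurable
    · rw [abs_mul]
      refine mul_le_mul ((hμbdd b (X ω)).trans (le_abs_self Cμ)) ?_ (abs_nonneg _) (abs_nonneg _)
      rw [abs_of_nonneg (hπstar01 b (X ω)).1]; exact (hπstar01 b (X ω)).2
  calc ∫ ω in E, f (X ω) (Astar ω) (U ω) ∂P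
      = ∫ ω in E, ∑ b : Fin m, (if Astar ω = b then (1:ℝ) else 0) * f (X ω) b (U ω) ∂P :=
        setIntegral_congr_fun hE_meas (fun ω _ => hsum ω)
    _ = ∑ b : Fin m, ∫ ω in E, (if Astar ω = b then (1:ℝ) else 0) * f (X ω) b (U ω) ∂P :=
        integral_finset_sum _ (fun b _ => (hitegb_int b).integrableOn)
    _ = ∑ b : Fin m, ∫ ω in E, μreg b (X ω) * πstar b (X ω) ∂P := by
        refine Finset.sum_congr rfl fun b _ => ?_
        rw [stepA b, stepB b]
    _ = ∫ ω in E, ∑ b : Fin m, μreg b (X ω) * πstar b (X ω) ∂P :=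
        (integral_finset_sum _ (fun b _ => (hμπ_int b).integrableOn)).symm
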